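/- arXiv:0801.0079 — 5 statements merged into one kernel-verified Lean document; each statement's English description precedes it below -/
import Mathlib

section
/- (Lemma 2) Let μ̂_{i,m+1}(x_1,…,x_m,y) denote the SDMMSA estimate of the i-th mean computed from data (x_1,n_1),…,(x_m,n_m),(y,n_{m+1}). If Ȳ_1 ≤ Ȳ_2 ≤ … ≤ Ȳ_m and y < y', then for every i ∈ [1,m+1], μ̂_{i,m+1}(Ȳ_1,…,Ȳ_m,y) ≤ μ̂_{i,m+1}(Ȳ_1,…,Ȳ_m,y'). -/
open Finset

noncomputable section SDMMSA

/-- Pooled weight `n_{i,j} = ∑_{h=i}^j n_h`. -/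
def pooledWeight (n : ℕ → ℝ) (i j : ℕ) : ℝ := ∑ h ∈ Finset.Icc i j, n h

/-- Pooled (weighted) mean `Ȳ_{i,j} = (∑_{h=i}^j n_h Y_h) / n_{i,j}`. -/
def pooledMean (n Y : ℕ → ℝ) (i j : ℕ) : ℝ :=
  (∑ h ∈ Finset.Icc i j, n h * Y h) / pooledWeight n i j

/-- The first SDMMSA index for the data `(Y_1,n_1),…,(Y_t,n_t)`:
the smallest `j ∈ [1,t]` at which `Ȳ_{j,t} = max_{1 ≤ j' ≤ t} Ȳ_{j',t}`. -/
def firstIdx (n Y : ℕ → ℝ) (t : ℕ) : ℕ :=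
  sInf {j | 1 ≤ j ∧ j ≤ t ∧ ∀ j', 1 ≤ j' → j' ≤ t → pooledMean n Y j' t ≤ pooledMean n Y j t}

/-- Fuel-based recursion implementing the SDMMSA step-down procedure: on data range `[1,t]`,
every `i ≥ i₁ = firstIdx n Y t` gets the pooled mean `Ȳ_{i₁,t}` of the top block, and for
`i < i₁` we recurse on the data range `[1, i₁ - 1]`.  A fuel of `t` suffices since the
range shrinks strictly at each step. -/
def sdmmsaAux (n Y : ℕ → ℝ) : ℕ → ℕ → ℕ → ℝ
  | 0, _, _ => 0
  | fuel + 1, t, i =>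
      if firstIdx n Y t ≤ i then pooledMean n Y (firstIdx n Y t) t
      else sdmmsaAux n Y fuel (firstIdx n Y t - 1) i

/-- `muhat n Y k i` is the SDMMSA estimate `μ̂_i` computed from the data
`(Y_1,n_1),…,(Y_k,n_k)`. -/
def muhat (n Y : ℕ → ℝ) (k i : ℕ) : ℝ := sdmmsaAux n Y k k i

/-- The SDMMSA indices `i_u` computed from the data `(Y_1,n_1),…,(Y_k,n_k)`:
`sdIdx n Y k 0 = i_0 = k+1` and `i_{u+1}` is the first SDMMSA index of `[1, i_u - 1]`. -/
def sdIdx (n Y : ℕ → ℝ) (k : ℕ) : ℕ → ℕ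
  | 0 => k + 1
  | u + 1 => firstIdx n Y (sdIdx n Y k u - 1)

/-- The number of steps `h` of the SDMMSA: the first `u` with `i_u = 1`. -/
def sdSteps (n Y : ℕ → ℝ) (k : ℕ) : ℕ := sInf {u | sdIdx n Y k u = 1}

end SDMMSA

section Helpers

lemma sum_Icc_split (f : ℕ → ℝ) {a b c : ℕ} (h1 : a ≤ b) (h2 : b < c) :
    ∑ h ∈ Finset.Icc a c, f h = (∑ h ∈ Finset.Icc a b, f h) + ∑ h ∈ Finset.Icc (b+1) c, f h := by
  rw [← Finset.sum_union (by rw [Finset.disjoint_left]; intro x hx hy; simp [Finset.mem_Icc] at hx hy; omega)]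
  congr 1
  ext x; simp [Finset.mem_Icc]; omega

lemma pooledWeight_pos {n : ℕ → ℝ} {i j : ℕ} (hij : i ≤ j)
    (hpos : ∀ h, i ≤ h → h ≤ j → 0 < n h) : 0 < pooledWeight n i j := by
  apply Finset.sum_pos
  · intro h hh; rw [Finset.mem_Icc] at hh; exact hpos h hh.1 hh.2
  · exact ⟨i, by simp [Finset.mem_Icc, hij]⟩

lemma pooledWeight_split {n : ℕ → ℝ} {a b c : ℕ} (h1 : a ≤ b) (h2 : b < c) :
    pooledWeight n a c = pooledWeight n a b + pooledWeight n (b+1) c :=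
  sum_Icc_split n h1 h2

lemma pooledMean_singleton {n Y : ℕ → ℝ} {t : ℕ} (h : n t ≠ 0) :
    pooledMean n Y t t = Y t := by
  simp only [pooledMean, pooledWeight, Finset.Icc_self, Finset.sum_singleton]
  field_simp

lemma firstIdx_le (n Y : ℕ → ℝ) (t : ℕ) : firstIdx n Y t ≤ t := by
  by_cases h : {j | 1 ≤ j ∧ j ≤ t ∧ ∀ j', 1 ≤ j' → j' ≤ t →
      pooledMean n Y j' t ≤ pooledMean n Y j t}.Nonempty
  · exact (Nat.sInf_mem h).2.1
  · rw [firstIdx, Set.not_nonempty_iff_eq_empty.mp h, Nat.sInf_empty]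
    exact Nat.zero_le t

/-- mean of values all `≤ c` is `≤ c`. -/
lemma pooledMean_le_of_forall_le {n Y : ℕ → ℝ} {i j : ℕ} {c : ℝ} (hij : i ≤ j)
    (hpos : ∀ h, i ≤ h → h ≤ j → 0 < n h)
    (hle : ∀ h, i ≤ h → h ≤ j → Y h ≤ c) : pooledMean n Y i j ≤ c := by
  have hW : 0 < pooledWeight n i j := pooledWeight_pos hij hpos
  rw [pooledMean, div_le_iff₀ hW]
  rw [pooledWeight, Finset.mul_sum]
  apply Finset.sum_le_sum
  intro h hh
  rw [Finset.mem_Icc] at hh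
  have := hpos h hh.1 hh.2
  have := hle h hh.1 hh.2
  nlinarith

/-- if a mean of values all `≤ c` equals `c` then all values equal `c`. -/
lemma eq_of_pooledMean_eq {n Y : ℕ → ℝ} {i j : ℕ} {c : ℝ} (hij : i ≤ j)
    (hpos : ∀ h, i ≤ h → h ≤ j → 0 < n h)
    (hle : ∀ h, i ≤ h → h ≤ j → Y h ≤ c)
    (heq : pooledMean n Y i j = c) :
    ∀ h, i ≤ h → h ≤ j → Y h = c := by
  have hW : 0 < pooledWeight n i j := pooledWeight_pos hij hpos
  rw [pooledMean, div_eq_iff (ne_of_gt hW)] at heq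
  have hsum : ∑ h ∈ Finset.Icc i j, n h * (c - Y h) = 0 := by
    have : ∑ h ∈ Finset.Icc i j, n h * (c - Y h)
        = c * pooledWeight n i j - ∑ h ∈ Finset.Icc i j, n h * Y h := by
      rw [pooledWeight, Finset.mul_sum, ← Finset.sum_sub_distrib]
      apply Finset.sum_congr rfl
      intro h _; ring
    rw [this, heq]; ring
  have hzero := (Finset.sum_eq_zero_iff_of_nonneg
    (fun h hh => by
      rw [Finset.mem_Icc] at hh
      have := hpos h hh.1 hh.2
      have := hle h hh.1 hh.2
      nlinarith)).mp hsum
  intro h h1 h2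
  have := hzero h (by rw [Finset.mem_Icc]; exact ⟨h1, h2⟩)
  have hn := hpos h h1 h2
  have : c - Y h = 0 := by
    rcases mul_eq_zero.mp this with h' | h'
    · exact absurd h' (ne_of_gt hn)
    · exact h'
  linarith

lemma firstIdx_spec (n Y : ℕ → ℝ) {t : ℕ} (ht : 1 ≤ t) :
    1 ≤ firstIdx n Y t ∧ firstIdx n Y t ≤ t ∧
      ∀ j', 1 ≤ j' → j' ≤ t → pooledMean n Y j' t ≤ pooledMean n Y (firstIdx n Y t) t := by
  have hne : {j | 1 ≤ j ∧ j ≤ t ∧ ∀ j', 1 ≤ j' → j' ≤ t →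
      pooledMean n Y j' t ≤ pooledMean n Y j t}.Nonempty := by
    obtain ⟨b, hb, hmax⟩ := Finset.exists_max_image (Finset.Icc 1 t)
      (fun j => pooledMean n Y j t) ⟨t, by simp [Finset.mem_Icc, ht]⟩
    rw [Finset.mem_Icc] at hb
    exact ⟨b, hb.1, hb.2, fun j' h1 h2 => hmax j' (by rw [Finset.mem_Icc]; exact ⟨h1, h2⟩)⟩
  exact Nat.sInf_mem hne

lemma pooledMean_congr {n Y₁ Y₂ : ℕ → ℝ} {i j : ℕ}
    (h : ∀ h', i ≤ h' → h' ≤ j → Y₁ h' = Y₂ h') :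
    pooledMean n Y₁ i j = pooledMean n Y₂ i j := by
  unfold pooledMean
  congr 1
  apply Finset.sum_congr rfl
  intro h' hh'
  rw [Finset.mem_Icc] at hh'
  rw [h h' hh'.1 hh'.2]

lemma firstIdx_congr {n Y₁ Y₂ : ℕ → ℝ} {t : ℕ}
    (h : ∀ h', 1 ≤ h' → h' ≤ t → Y₁ h' = Y₂ h') :
    firstIdx n Y₁ t = firstIdx n Y₂ t := by
  unfold firstIdx
  congr 1
  ext j
  have key : ∀ j', 1 ≤ j' → j' ≤ t → pooledMean n Y₁ j' t = pooledMean n Y₂ j' t := by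
    intro j' h1 h2
    exact pooledMean_congr (fun h' hh1 hh2 => h h' (le_trans h1 hh1) hh2)
  constructor
  · rintro ⟨h1, h2, h3⟩
    refine ⟨h1, h2, fun j' hj1 hj2 => ?_⟩
    rw [← key j' hj1 hj2, ← key j h1 h2]
    exact h3 j' hj1 hj2
  · rintro ⟨h1, h2, h3⟩
    refine ⟨h1, h2, fun j' hj1 hj2 => ?_⟩
    rw [key j' hj1 hj2, key j h1 h2]
    exact h3 j' hj1 hj2

lemma sdmmsaAux_congr {n Y₁ Y₂ : ℕ → ℝ} :
    ∀ (fuel t i : ℕ), 1 ≤ t → 1 ≤ i → (∀ h', 1 ≤ h' → h' ≤ t → Y₁ h' = Y₂ h') →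
    sdmmsaAux n Y₁ fuel t i = sdmmsaAux n Y₂ fuel t i := by
  intro fuel
  induction fuel with
  | zero => intro t i _ _ _; rfl
  | succ f ih =>
    intro t i ht hi h
    have hfi : firstIdx n Y₁ t = firstIdx n Y₂ t := firstIdx_congr h
    obtain ⟨ha1, hat, -⟩ := firstIdx_spec n Y₁ ht
    show (if firstIdx n Y₁ t ≤ i then pooledMean n Y₁ (firstIdx n Y₁ t) t
        else sdmmsaAux n Y₁ f (firstIdx n Y₁ t - 1) i)
      = (if firstIdx n Y₂ t ≤ i then pooledMean n Y₂ (firstIdx n Y₂ t) t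
        else sdmmsaAux n Y₂ f (firstIdx n Y₂ t - 1) i)
    rw [← hfi]
    by_cases hcase : firstIdx n Y₁ t ≤ i
    · rw [if_pos hcase, if_pos hcase]
      exact pooledMean_congr (fun h' hh1 hh2 => h h' (le_trans ha1 hh1) hh2)
    · rw [if_neg hcase, if_neg hcase]
      apply ih
      · omega
      · exact hi
      · intro h' hh1 hh2
        exact h h' hh1 (by omega)

/-- SDMMSA on monotone data returns the data itself. -/
lemma sdmmsaAux_of_monotone {n Y : ℕ → ℝ} :
    ∀ (fuel t i : ℕ), t ≤ fuel → 1 ≤ i → i ≤ t →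
    (∀ h, 1 ≤ h → h ≤ t → 0 < n h) →
    (∀ v v', 1 ≤ v → v ≤ v' → v' ≤ t → Y v ≤ Y v') →
    sdmmsaAux n Y fuel t i = Y i := by
  intro fuel
  induction fuel with
  | zero => intro t i ht h1 h2 _ _; omega
  | succ f ih =>
    intro t i htf h1i hit hpos hmono
    have ht1 : 1 ≤ t := le_trans h1i hit
    obtain ⟨ha1, hat, hamax⟩ := firstIdx_spec n Y ht1
    set a := firstIdx n Y t with ha
    show (if a ≤ i then pooledMean n Y a t else sdmmsaAux n Y f (a - 1) i) = Y i
    by_cases hai : a ≤ i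
    · rw [if_pos hai]
      have hle : pooledMean n Y a t ≤ Y t :=
        pooledMean_le_of_forall_le hat (fun h hh1 hh2 => hpos h (le_trans ha1 hh1) hh2)
          (fun h hh1 hh2 => hmono h t (le_trans ha1 hh1) hh2 le_rfl)
      have hge : Y t ≤ pooledMean n Y a t := by
        have := hamax t ht1 le_rfl
        rwa [pooledMean_singleton (ne_of_gt (hpos t ht1 le_rfl))] at this
      have heq : pooledMean n Y a t = Y t := le_antisymm hle hge
      have hall := eq_of_pooledMean_eq hat
        (fun h hh1 hh2 => hpos h (le_trans ha1 hh1) hh2)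
        (fun h hh1 hh2 => hmono h t (le_trans ha1 hh1) hh2 le_rfl) heq
      rw [heq, hall i hai hit]
    · rw [if_neg hai]
      apply ih
      · omega
      · exact h1i
      · omega
      · intro h hh1 hh2; exact hpos h hh1 (by omega)
      · intro v v' hv1 hv2 hv3; exact hmono v v' hv1 hv2 (by omega)

end Helpers

section Helpers2

lemma right_le_mix {W1 W2 S1 S2 : ℝ} (h1 : 0 < W1) (h2 : 0 < W2)
    (h : S2/W2 ≤ (S1+S2)/(W1+W2)) : (S1+S2)/(W1+W2) ≤ S1/W1 := by
  rw [div_le_div_iff₀ (by linarith) h1]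
  rw [div_le_div_iff₀ h2 (by linarith)] at h
  nlinarith

lemma pooledMean_shift {n Y₁ Y₂ : ℕ → ℝ} {j t : ℕ} (hjt : j ≤ t)
    (heq : ∀ h, j ≤ h → h < t → Y₁ h = Y₂ h) :
    pooledMean n Y₂ j t = pooledMean n Y₁ j t + n t * (Y₂ t - Y₁ t) / pooledWeight n j t := by
  unfold pooledMean
  have key : ∑ h ∈ Finset.Icc j t, (n h * Y₂ h - n h * Y₁ h) = n t * (Y₂ t - Y₁ t) := by
    rw [Finset.sum_eq_single t]
    · ring
    · intro b hb hbt
      rw [Finset.mem_Icc] at hb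
      rw [heq b hb.1 (lt_of_le_of_ne hb.2 hbt)]; ring
    · intro hcon; exact absurd (by rw [Finset.mem_Icc]; exact ⟨hjt, le_rfl⟩) hcon
  rw [Finset.sum_sub_distrib] at key
  have hnum : ∑ h ∈ Finset.Icc j t, n h * Y₂ h
      = (∑ h ∈ Finset.Icc j t, n h * Y₁ h) + n t * (Y₂ t - Y₁ t) := by linarith
  rw [hnum, add_div]

end Helpers2


/-- Lemma 2: if `Ȳ_1 ≤ … ≤ Ȳ_m` and `y < y'`, then for every
`i ∈ [1, m+1]`, `μ̂_{i,m+1}(Ȳ_1,…,Ȳ_m,y) ≤ μ̂_{i,m+1}(Ȳ_1,…,Ȳ_m,y')`. -/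
theorem sdmmsa_monotone_in_last (m : ℕ) (hm : 1 ≤ m) (n Y : ℕ → ℝ)
    (hn : ∀ h, 1 ≤ h → h ≤ m + 1 → 0 < n h)
    (hY : ∀ v v', 1 ≤ v → v ≤ v' → v' ≤ m → Y v ≤ Y v')
    (y y' : ℝ) (hyy' : y < y') :
    ∀ i, 1 ≤ i → i ≤ m + 1 →
      muhat n (fun t => if t = m + 1 then y else Y t) (m + 1) i ≤
        muhat n (fun t => if t = m + 1 then y' else Y t) (m + 1) i := by
  intro i hi1 hi2
  set Y₁ : ℕ → ℝ := fun t => if t = m + 1 then y else Y t with hY₁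
  set Y₂ : ℕ → ℝ := fun t => if t = m + 1 then y' else Y t with hY₂
  have hY₁m : ∀ h, h ≤ m → Y₁ h = Y h := by
    intro h hh; simp only [hY₁]; rw [if_neg (by omega)]
  have hY₂m : ∀ h, h ≤ m → Y₂ h = Y h := by
    intro h hh; simp only [hY₂]; rw [if_neg (by omega)]
  have htop : Y₂ (m+1) - Y₁ (m+1) = y' - y := by simp [hY₁, hY₂]
  have hm1 : (1:ℕ) ≤ m + 1 := by omega
  obtain ⟨ha1, hat, hamax⟩ := firstIdx_spec n Y₁ hm1
  obtain ⟨ha'1, ha't, ha'max⟩ := firstIdx_spec n Y₂ hm1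
  set a := firstIdx n Y₁ (m+1) with ha
  set a' := firstIdx n Y₂ (m+1) with ha'
  -- the shift identity
  have hshift : ∀ j, 1 ≤ j → j ≤ m + 1 →
      pooledMean n Y₂ j (m+1) = pooledMean n Y₁ j (m+1)
        + n (m+1) * (y' - y) / pooledWeight n j (m+1) := by
    intro j hj1 hj2
    rw [← htop]
    exact pooledMean_shift hj2 (fun h h1 h2 => by
      rw [hY₁m h (by omega), hY₂m h (by omega)])
  have hc : 0 < n (m+1) * (y' - y) := by
    have := hn (m+1) hm1 le_rfl
    nlinarith
  -- a ≤ a'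
  have haa' : a ≤ a' := by
    by_contra hcon
    push_neg at hcon  -- a' < a
    have hWa : 0 < pooledWeight n a (m+1) :=
      pooledWeight_pos hat (fun h h1 h2 => hn h (le_trans ha1 h1) h2)
    have hWsplit : pooledWeight n a' (m+1)
        = pooledWeight n a' (a-1) + pooledWeight n a (m+1) := by
      have := pooledWeight_split (n := n) (a := a') (b := a - 1) (c := m + 1)
        (by omega) (by omega)
      have haeq : a - 1 + 1 = a := by omega
      rwa [haeq] at this
    have hWmid : 0 < pooledWeight n a' (a-1) :=
      pooledWeight_pos (by omega) (fun h h1 h2 => hn h (le_trans ha'1 h1) (by omega))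
    have hWlt : pooledWeight n a (m+1) < pooledWeight n a' (m+1) := by
      rw [hWsplit]; linarith
    have hdlt : n (m+1) * (y' - y) / pooledWeight n a' (m+1)
        < n (m+1) * (y' - y) / pooledWeight n a (m+1) :=
      div_lt_div_of_pos_left hc hWa hWlt
    have h1 : pooledMean n Y₁ a' (m+1) ≤ pooledMean n Y₁ a (m+1) :=
      hamax a' ha'1 ha't
    have h2 : pooledMean n Y₂ a (m+1) ≤ pooledMean n Y₂ a' (m+1) :=
      ha'max a ha1 hat
    rw [hshift a ha1 hat, hshift a' ha'1 ha't] at h2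
    linarith
  -- evaluation of the recursion on pure (monotone) data
  have hpure : ∀ (Z : ℕ → ℝ) (b : ℕ), 1 ≤ b → b ≤ m + 1 → i < b →
      (∀ h, h ≤ m → Z h = Y h) →
      sdmmsaAux n Z m (b - 1) i = Y i := by
    intro Z b hb1 hb2 hib hZ
    rw [sdmmsaAux_congr m (b-1) i (by omega) hi1
      (Y₂ := Y) (fun h' h1 h2 => hZ h' (by omega))]
    exact sdmmsaAux_of_monotone m (b-1) i (by omega) hi1 (by omega)
      (fun h h1 h2 => hn h h1 (by omega))
      (fun v v' h1 h2 h3 => hY v v' h1 h2 (by omega))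
  show (if a ≤ i then pooledMean n Y₁ a (m+1) else sdmmsaAux n Y₁ m (a - 1) i)
      ≤ (if a' ≤ i then pooledMean n Y₂ a' (m+1) else sdmmsaAux n Y₂ m (a' - 1) i)
  by_cases hia' : a' ≤ i
  · -- both pooled means
    rw [if_pos (le_trans haa' hia'), if_pos hia']
    have h1 : pooledMean n Y₁ a (m+1) ≤ pooledMean n Y₂ a (m+1) := by
      rw [hshift a ha1 hat]
      have hWa : 0 < pooledWeight n a (m+1) :=
        pooledWeight_pos hat (fun h h1 h2 => hn h (le_trans ha1 h1) h2)
      have : 0 < n (m+1) * (y' - y) / pooledWeight n a (m+1) := by positivity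
      linarith
    exact le_trans h1 (ha'max a ha1 hat)
  · rw [if_neg hia']
    push_neg at hia'
    rw [hpure Y₂ a' ha'1 ha't hia' (fun h hh => hY₂m h hh)]
    by_cases hia : a ≤ i
    · -- a ≤ i < a' : show pooledMean n Y₁ a (m+1) ≤ Y i
      rw [if_pos hia]
      have him : i < m + 1 := by omega
      have hsplitM : pooledMean n Y₁ a (m+1)
          = ((∑ h ∈ Finset.Icc a i, n h * Y₁ h) + ∑ h ∈ Finset.Icc (i+1) (m+1), n h * Y₁ h)
            / (pooledWeight n a i + pooledWeight n (i+1) (m+1)) := by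
        unfold pooledMean
        rw [sum_Icc_split _ hia him, pooledWeight_split hia him]
      have hW1 : 0 < pooledWeight n a i :=
        pooledWeight_pos hia (fun h h1 h2 => hn h (le_trans ha1 h1) (by omega))
      have hW2 : 0 < pooledWeight n (i+1) (m+1) :=
        pooledWeight_pos (by omega) (fun h h1 h2 => hn h (by omega) h2)
      have hmaxi : pooledMean n Y₁ (i+1) (m+1) ≤ pooledMean n Y₁ a (m+1) :=
        hamax (i+1) (by omega) (by omega)
      have hkey : pooledMean n Y₁ a (m+1) ≤ pooledMean n Y₁ a i := by
        have := right_le_mix hW1 hW2 (by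
          rw [← hsplitM]
          exact hmaxi)
        rw [hsplitM]
        exact this
      have hfin : pooledMean n Y₁ a i ≤ Y i := by
        rw [pooledMean_congr (Y₂ := Y) (fun h' h1 h2 => hY₁m h' (by omega))]
        exact pooledMean_le_of_forall_le hia
          (fun h h1 h2 => hn h (le_trans ha1 h1) (by omega))
          (fun h h1 h2 => hY h i (le_trans ha1 h1) h2 (by omega))
      exact le_trans hkey hfin
    · -- i < a ≤ a' : both equal Y i
      rw [if_neg hia]
      push_neg at hia
      rw [hpure Y₁ a ha1 hat hia (fun h hh => hY₁m h hh)]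
end

section
/- (Equation (2.31): characterization of the first SDMMSA index) Consider data (Ȳ_1,n_1),…,(Ȳ_{m+1},n_{m+1}) such that Ȳ_v is nondecreasing in v for v ∈ [1,m] (Ȳ_{m+1} arbitrary). Let i_1 be the first SDMMSA index for these m+1 data points, i.e., the smallest index attaining max_{1 ≤ j ≤ m+1} Ȳ_{j,m+1}. Then i_1 = min{ v ∈ [1,m+1] : Ȳ_v ≥ Ȳ_{v,m+1} }. -/
open Finset

lemma sum_Icc_split_s14 {v t : ℕ} (hv : v ≤ t) (f : ℕ → ℝ) :
    ∑ h ∈ Finset.Icc v t, f h = f v + ∑ h ∈ Finset.Icc (v+1) t, f h := by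
  rw [Finset.Icc_add_one_left_eq_Ioc, ← Finset.Ioc_insert_left hv, Finset.sum_insert (by simp)]

lemma pw_pos {m : ℕ} (n : ℕ → ℝ) (hn : ∀ h, 1 ≤ h → h ≤ m + 1 → 0 < n h)
    {i : ℕ} (hi1 : 1 ≤ i) (hi2 : i ≤ m + 1) : 0 < pooledWeight n i (m+1) := by
  apply Finset.sum_pos
  · intro h hh
    simp only [Finset.mem_Icc] at hh
    exact hn h (le_trans hi1 hh.1) hh.2
  · exact ⟨i, by simp [Finset.mem_Icc, hi2]⟩

lemma mean_single {m : ℕ} (n Y : ℕ → ℝ) (hn : ∀ h, 1 ≤ h → h ≤ m + 1 → 0 < n h) :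
    pooledMean n Y (m+1) (m+1) = Y (m+1) := by
  have h := hn (m+1) (by omega) le_rfl
  simp only [pooledMean, pooledWeight, Finset.Icc_self, Finset.sum_singleton]
  rw [mul_comm, mul_div_assoc, div_self h.ne', mul_one]

lemma key_lemma {m : ℕ} (n Y : ℕ → ℝ) (hn : ∀ h, 1 ≤ h → h ≤ m + 1 → 0 < n h)
    {v : ℕ} (h1 : 1 ≤ v) (h2 : v ≤ m) :
    (Y v < pooledMean n Y v (m+1) → pooledMean n Y v (m+1) < pooledMean n Y (v+1) (m+1)) ∧
    (pooledMean n Y v (m+1) ≤ Y v → pooledMean n Y (v+1) (m+1) ≤ pooledMean n Y v (m+1)) := by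
  have hW : 0 < pooledWeight n (v+1) (m+1) := pw_pos n hn (by omega) (by omega)
  have hc : 0 < n v := hn v h1 (by omega)
  have hWv : 0 < pooledWeight n v (m+1) := pw_pos n hn h1 (by omega)
  have hsplitW : pooledWeight n v (m+1) = n v + pooledWeight n (v+1) (m+1) :=
    sum_Icc_split_s14 (by omega) n
  have hsplitS : ∑ h ∈ Finset.Icc v (m+1), n h * Y h
      = n v * Y v + ∑ h ∈ Finset.Icc (v+1) (m+1), n h * Y h :=
    sum_Icc_split_s14 (by omega) _
  set a := pooledMean n Y (v+1) (m+1) with ha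
  set gv := pooledMean n Y v (m+1) with hgv
  have hnum : ∑ h ∈ Finset.Icc (v+1) (m+1), n h * Y h = pooledWeight n (v+1) (m+1) * a := by
    rw [ha, pooledMean]; field_simp
  have heq : gv * (n v + pooledWeight n (v+1) (m+1)) = n v * Y v + pooledWeight n (v+1) (m+1) * a := by
    rw [hgv, pooledMean, hsplitS, hnum, ← hsplitW]
    field_simp
  constructor
  · intro h; nlinarith
  · intro h; nlinarith

theorem firstIdx_char_aux (m : ℕ) (hm : 1 ≤ m) (n Y : ℕ → ℝ)
    (hn : ∀ h, 1 ≤ h → h ≤ m + 1 → 0 < n h)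
    (hY : ∀ v v', 1 ≤ v → v ≤ v' → v' ≤ m → Y v ≤ Y v') :
    sInf {j | 1 ≤ j ∧ j ≤ m + 1 ∧ ∀ j', 1 ≤ j' → j' ≤ m + 1 →
        pooledMean n Y j' (m+1) ≤ pooledMean n Y j (m+1)} =
      sInf {v | 1 ≤ v ∧ v ≤ m + 1 ∧ pooledMean n Y v (m + 1) ≤ Y v} := by
  set S : Set ℕ := {v | 1 ≤ v ∧ v ≤ m + 1 ∧ pooledMean n Y v (m+1) ≤ Y v} with hSdef
  have hmem : (m+1) ∈ S := ⟨by omega, le_rfl, (mean_single n Y hn).le⟩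
  set i := sInf S with hi
  have hiS : i ∈ S := Nat.sInf_mem ⟨_, hmem⟩
  obtain ⟨hi1, hi2, hiY⟩ := hiS
  have hlt : ∀ v, 1 ≤ v → v < i → pooledMean n Y v (m+1) < pooledMean n Y (v+1) (m+1) := by
    intro v hv1 hv2
    have hvm : v ≤ m := by omega
    have hnot : ¬ (pooledMean n Y v (m+1) ≤ Y v) := by
      intro h
      have hvS : v ∈ S := ⟨hv1, by omega, h⟩
      have := Nat.sInf_le hvS
      omega
    exact (key_lemma n Y hn hv1 hvm).1 (lt_of_not_ge hnot)
  have hltI : ∀ v, 1 ≤ v → v < i → pooledMean n Y v (m+1) < pooledMean n Y i (m+1) := by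
    intro v hv1 hvlt
    have main : ∀ w, v + 1 ≤ w → w ≤ i → pooledMean n Y v (m+1) < pooledMean n Y w (m+1) := by
      intro w hw
      induction w, hw using Nat.le_induction with
      | base => exact fun _ => hlt v hv1 hvlt
      | succ w hw ih =>
        intro hwi
        have h1 : pooledMean n Y v (m+1) < pooledMean n Y w (m+1) := ih (by omega)
        have h2 : pooledMean n Y w (m+1) < pooledMean n Y (w+1) (m+1) := hlt w (by omega) (by omega)
        linarith
    exact main i (by omega) le_rfl
  have hgeI : ∀ v, i ≤ v → v ≤ m+1 → pooledMean n Y v (m+1) ≤ pooledMean n Y i (m+1)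
      ∧ (v ≤ m → pooledMean n Y v (m+1) ≤ Y v) := by
    intro v hv
    induction v, hv using Nat.le_induction with
    | base => exact fun _ => ⟨le_rfl, fun _ => hiY⟩
    | succ v hv ih =>
      intro hv1
      have hvm : v ≤ m := by omega
      obtain ⟨ha, hb⟩ := ih (by omega)
      have hY' : pooledMean n Y v (m+1) ≤ Y v := hb hvm
      have hdec : pooledMean n Y (v+1) (m+1) ≤ pooledMean n Y v (m+1) :=
        (key_lemma n Y hn (by omega) hvm).2 hY'
      refine ⟨le_trans hdec ha, fun hvm1 => ?_⟩
      have : Y v ≤ Y (v+1) := hY v (v+1) (by omega) (by omega) hvm1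
      linarith
  set A : Set ℕ := {j | 1 ≤ j ∧ j ≤ m + 1 ∧ ∀ j', 1 ≤ j' → j' ≤ m + 1 →
      pooledMean n Y j' (m+1) ≤ pooledMean n Y j (m+1)} with hAdef
  have hiA : i ∈ A := by
    refine ⟨hi1, hi2, fun j' hj'1 hj'2 => ?_⟩
    rcases lt_or_ge j' i with h | h
    · exact le_of_lt (hltI j' hj'1 h)
    · exact (hgeI j' h hj'2).1
  have hle : sInf A ≤ i := Nat.sInf_le hiA
  have hub : ∀ j ∈ A, i ≤ j := by
    intro j hj
    by_contra hc
    push_neg at hc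
    have h1 := hj.2.2 i hi1 hi2
    have h2 := hltI j hj.1 hc
    linarith
  have hge : i ≤ sInf A := hub _ (Nat.sInf_mem ⟨i, hiA⟩)
  omega


/-- eq. (2.31): if `Ȳ_v` is nondecreasing for `v ∈ [1,m]` (with `Ȳ_{m+1}`
arbitrary), then the first SDMMSA index for the `m+1` data points is
`i_1 = min{ v ∈ [1,m+1] : Ȳ_v ≥ Ȳ_{v,m+1} }`. -/
theorem firstIdx_characterization (m : ℕ) (hm : 1 ≤ m) (n Y : ℕ → ℝ)
    (hn : ∀ h, 1 ≤ h → h ≤ m + 1 → 0 < n h)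
    (hY : ∀ v v', 1 ≤ v → v ≤ v' → v' ≤ m → Y v ≤ Y v') :
    firstIdx n Y (m + 1) =
      sInf {v | 1 ≤ v ∧ v ≤ m + 1 ∧ pooledMean n Y v (m + 1) ≤ Y v} := by
  rw [firstIdx]
  exact firstIdx_char_aux m hm n Y hn hY
end

section
/- (Theorem 4) Let Ȳ_0, Ȳ_1, …, Ȳ_k, V be independent random variables with Ȳ_i ~ N(μ_i, σ²/n_i) for i = 0,…,k and V ~ χ²_ν (chi-squared with ν degrees of freedom), and set S = σ√(V/ν) and η_i = μ_i − μ_0. Let T : ℝ^k → ℝ be bounded, measurable, and nondecreasing in each coordinate, and for i = 1,…,k let g_i : ℝ^k → ℝ be measurable, nondecreasing in each coordinate, and affinely equivariant: g_i(c t_1 + d, …, c t_k + d) = c g_i(t_1,…,t_k) + d for all constants c > 0 and d. Fix δ ∈ ℝ. Then f(η_1,…,η_k,σ) := E[ T( (g_1(Ȳ_1,…,Ȳ_k) − Ȳ_0 − δ)/S, …, (g_k(Ȳ_1,…,Ȳ_k) − Ȳ_0 − δ)/S ) ] is nondecreasing in each η_i when the other η_j and σ > 0 are held fixed. -/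
open MeasureTheory ProbabilityTheory

noncomputable section

/-- The chi-squared distribution with `ν` degrees of freedom: the Gamma distribution with
shape `ν/2` and rate `1/2`. -/
def chiSquared (ν : ℕ) : Measure ℝ := gammaMeasure ((ν : ℝ) / 2) (1 / 2)

/-- Theorem 4: let `Ȳ_0,…,Ȳ_k, V` be independent with `Ȳ_i ~ N(μ_i, σ²/nᵢ)`
(where `μ_0` is the control mean and `μ_i = μ_0 + η_i` for `i ≥ 1`) and `V ~ χ²_ν`, and set
`S = σ√(V/ν)`.  If `T` is bounded, measurable and nondecreasing in each coordinate, and each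
`g_i` is measurable, nondecreasing in each coordinate and affinely equivariant, then
`f(η_1,…,η_k,σ) = E[T((g_1(Ȳ_1,…,Ȳ_k) - Ȳ_0 - δ)/S, …, (g_k(Ȳ_1,…,Ȳ_k) - Ȳ_0 - δ)/S)]`
is nondecreasing in each `η_i` when the other `η_j` and `σ` are held fixed.
(Coordinate `0 : Fin (k+1)` of the first factor carries `Ȳ_0`, coordinate `v.succ`
carries `Ȳ_{v+1}`, and the second factor carries `V`.) -/
theorem expectation_monotone_in_eta (k : ℕ) (hk : 1 ≤ k) (ν : ℕ) (hν : 1 ≤ ν)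
    (n : Fin (k + 1) → ℝ) (hn : ∀ v, 0 < n v)
    (δ μ0 : ℝ) (σ : ℝ) (hσ : 0 < σ)
    (T : (Fin k → ℝ) → ℝ) (hTmeas : Measurable T) (hTmono : Monotone T)
    (hTbdd : ∃ C, ∀ t, |T t| ≤ C)
    (g : Fin k → (Fin k → ℝ) → ℝ)
    (hgmeas : ∀ i, Measurable (g i)) (hgmono : ∀ i, Monotone (g i))
    (hgaff : ∀ i (c d : ℝ), 0 < c →
      ∀ t : Fin k → ℝ, g i (fun v => c * t v + d) = c * g i t + d)
    (η η' : Fin k → ℝ) (i0 : Fin k)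
    (hle : η i0 ≤ η' i0) (heq : ∀ j, j ≠ i0 → η j = η' j) :
    (∫ p : (Fin (k + 1) → ℝ) × ℝ,
        T (fun i => (g i (fun v => p.1 v.succ) - p.1 0 - δ) / (σ * Real.sqrt (p.2 / ν)))
        ∂((Measure.pi fun v : Fin (k + 1) =>
              gaussianReal ((Fin.cons μ0 (fun w => μ0 + η w) : Fin (k + 1) → ℝ) v) ((σ ^ 2 / n v).toNNReal)).prod
            (chiSquared ν))) ≤
    (∫ p : (Fin (k + 1) → ℝ) × ℝ,
        T (fun i => (g i (fun v => p.1 v.succ) - p.1 0 - δ) / (σ * Real.sqrt (p.2 / ν)))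
        ∂((Measure.pi fun v : Fin (k + 1) =>
              gaussianReal ((Fin.cons μ0 (fun w => μ0 + η' w) : Fin (k + 1) → ℝ) v) ((σ ^ 2 / n v).toNNReal)).prod
            (chiSquared ν))) := by
  classical
  -- notation
  set m : Fin (k + 1) → ℝ := (Fin.cons μ0 (fun w => μ0 + η w) : Fin (k + 1) → ℝ) with hm
  set m' : Fin (k + 1) → ℝ := (Fin.cons μ0 (fun w => μ0 + η' w) : Fin (k + 1) → ℝ) with hm'
  set c : ℝ := η' i0 - η i0 with hcdef
  have hc : 0 ≤ c := by simp [hcdef]; linarith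
  set e : Fin (k + 1) → ℝ := fun v => if v = i0.succ then c else 0 with hedef
  have he0 : e 0 = 0 := by
    simp only [hedef]
    rw [if_neg]
    exact fun h => (Fin.succ_ne_zero i0) h.symm
  have henn : ∀ v, 0 ≤ e v := by
    intro v; simp only [hedef]; split <;> simp [hc]
  have hme : ∀ v, m' v = m v + e v := by
    intro v
    refine Fin.cases ?_ (fun w => ?_) v
    · simp [hm, hm', he0]
    · simp only [hm, hm', Fin.cons_succ, hedef]
      by_cases hw : w = i0
      · subst hw; simp [hcdef]
      · rw [if_neg (fun h => hw (Fin.succ_injective _ h)), heq w hw]; ring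
  -- the integrand
  set h : ((Fin (k + 1) → ℝ) × ℝ) → ℝ := fun p =>
    T (fun i => (g i (fun v => p.1 v.succ) - p.1 0 - δ) / (σ * Real.sqrt (p.2 / ν))) with hhdef
  have hhmeas : Measurable h := by
    apply hTmeas.comp
    apply measurable_pi_lambda
    intro i
    exact ((((hgmeas i).comp (measurable_pi_lambda _ fun v =>
        (measurable_pi_apply v.succ).comp measurable_fst)).sub
        ((measurable_pi_apply 0).comp measurable_fst)).sub measurable_const).div
      (measurable_const.mul
        (Real.continuous_sqrt.measurable.comp (measurable_snd.div_const _)))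
  -- the shift map
  set F : (Fin (k + 1) → ℝ) → (Fin (k + 1) → ℝ) := fun a v => a v + e v with hFdef
  set Φ : ((Fin (k + 1) → ℝ) × ℝ) → ((Fin (k + 1) → ℝ) × ℝ) := fun p => (F p.1, p.2) with hΦdef
  haveI : IsProbabilityMeasure (chiSquared ν) :=
    isProbabilityMeasure_gammaMeasure (by positivity) (by norm_num)
  have hMP : MeasurePreserving F
      (Measure.pi fun v => gaussianReal (m v) ((σ ^ 2 / n v).toNNReal))
      (Measure.pi fun v => gaussianReal (m' v) ((σ ^ 2 / n v).toNNReal)) := by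
    refine measurePreserving_pi (f := fun v x => x + e v) _ _
      fun v => ⟨measurable_id'.add_const _, ?_⟩
    rw [gaussianReal_map_add_const, hme v]
  have hMP2 : MeasurePreserving Φ
      ((Measure.pi fun v => gaussianReal (m v) ((σ ^ 2 / n v).toNNReal)).prod (chiSquared ν))
      ((Measure.pi fun v => gaussianReal (m' v) ((σ ^ 2 / n v).toNNReal)).prod (chiSquared ν)) :=
    hMP.prod (MeasurePreserving.id _)
  set P := (Measure.pi fun v => gaussianReal (m v) ((σ ^ 2 / n v).toNNReal)).prod (chiSquared ν)
    with hPdef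
  haveI : IsProbabilityMeasure P := by
    apply Measure.prod.instIsProbabilityMeasure
  -- pointwise monotonicity: h p ≤ h (Φ p)
  have hpt : ∀ p, h p ≤ h (Φ p) := by
    intro p
    simp only [hhdef, hΦdef, hFdef]
    rcases le_or_gt (Real.sqrt (p.2 / ν)) 0 with hs | hs
    · have : Real.sqrt (p.2 / ν) = 0 := le_antisymm hs (Real.sqrt_nonneg _)
      simp [this]
    · apply hTmono
      intro i
      have hden : 0 < σ * Real.sqrt (p.2 / ν) := mul_pos hσ hs
      have hg : g i (fun v => p.1 v.succ) ≤ g i (fun v => p.1 v.succ + e v.succ) := by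
        apply hgmono i
        intro v
        exact le_add_of_nonneg_right (henn v.succ)
      rw [he0, add_zero, div_le_div_iff_of_pos_right hden]
      linarith
  -- integrability
  obtain ⟨C, hC⟩ := hTbdd
  have hbd : ∀ q : ((Fin (k + 1) → ℝ) × ℝ), ‖h q‖ ≤ C := fun q => hC _
  have hint1 : Integrable h P :=
    ⟨hhmeas.aestronglyMeasurable, HasFiniteIntegral.of_bounded (ae_of_all _ hbd)⟩
  have hint2 : Integrable (h ∘ Φ) P :=
    ⟨(hhmeas.comp hMP2.measurable).aestronglyMeasurable,
      HasFiniteIntegral.of_bounded (ae_of_all _ fun q => hC _)⟩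
  calc ∫ p, h p ∂P ≤ ∫ p, h (Φ p) ∂P := integral_mono hint1 hint2 hpt
    _ = ∫ p, h p
        ∂((Measure.pi fun v => gaussianReal (m' v) ((σ ^ 2 / n v).toNNReal)).prod
          (chiSquared ν)) := by
      rw [← hMP2.map_eq, integral_map hMP2.measurable.aemeasurable]
      rw [hMP2.map_eq]
      exact hhmeas.aestronglyMeasurable
end
end

section
/- (Lemma 4, monotone comparison form) Let Ȳ_0, Ȳ_1, …, Ȳ_k, V be independent with Ȳ_i ~ N(μ_i, σ²/n_i) and V ~ χ²_ν, and set S = σ√(V/ν). Let μ̂_i = μ̂_i(Ȳ_1,…,Ȳ_k) be the SDMMSA estimate with weights n_1,…,n_k, and for constants c and δ let R^I_{i,c} be the event {(μ̂_i − Ȳ_0 − δ)/S > c}. Then for each i ∈ [1,k], the probability P_{(μ_0,μ_1,…,μ_k)}(R^I_{i,c}) is nondecreasing in each μ_j (j ∈ [1,k]) when μ_0, the other μ_{j'} and σ are held fixed. Consequently, for any monotone configuration μ_1 ≤ … ≤ μ_k with μ_i ≤ μ_0 + δ, P_{(μ_0,μ_1,…,μ_k)}(R^I_{i,c}) ≤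 P_{(μ_0,μ'_1,…,μ'_k)}(R^I_{i,c}), where μ'_j = μ_0 + δ for j ≤ i and μ'_j = max(μ_j, μ_0 + δ) for j > i. -/
open Finset

noncomputable section SDMMSAProof

namespace SDMMSAProof

/-- `bmax n Y s = max_{1 ≤ j ≤ s} Ȳ_{j,s}` (junk extension via `max 1 s`). -/
def bmax (n Y : ℕ → ℝ) (s : ℕ) : ℝ :=
  (Finset.Icc 1 (max 1 s)).sup' (Finset.nonempty_Icc.2 (le_max_left 1 s))
    (fun j => pooledMean n Y j s)

/-- `minimax n Y i t = min_{i ≤ s ≤ t} bmax s`. -/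
def minimax (n Y : ℕ → ℝ) (i t : ℕ) : ℝ :=
  (Finset.Icc i (max i t)).inf' (Finset.nonempty_Icc.2 (le_max_left i t))
    (fun s => bmax n Y s)

variable {n Y Y' : ℕ → ℝ} {k : ℕ}

lemma pooledWeight_pos (hn : ∀ h, 1 ≤ h → h ≤ k → 0 < n h) {j t : ℕ}
    (h1 : 1 ≤ j) (h2 : j ≤ t) (h3 : t ≤ k) : 0 < pooledWeight n j t := by
  apply Finset.sum_pos
  · intro h hh
    rw [Finset.mem_Icc] at hh
    exact hn h (le_trans h1 hh.1) (le_trans hh.2 h3)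
  · exact ⟨j, by rw [Finset.mem_Icc]; omega⟩

lemma mulDiv {a b : ℝ} (h : b ≠ 0) : b * (a / b) = a := by field_simp

lemma pooled_split (hn : ∀ h, 1 ≤ h → h ≤ k → 0 < n h) {j s t : ℕ}
    (h1 : 1 ≤ j) (hjs : j ≤ s) (hst : s < t) (htk : t ≤ k) :
    pooledWeight n j t = pooledWeight n j s + pooledWeight n (s+1) t ∧
    pooledWeight n j t * pooledMean n Y j t =
      pooledWeight n j s * pooledMean n Y j s
        + pooledWeight n (s+1) t * pooledMean n Y (s+1) t := by
  have hsplit : ∀ f : ℕ → ℝ,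
      ∑ h ∈ Finset.Icc j t, f h
        = (∑ h ∈ Finset.Icc j s, f h) + ∑ h ∈ Finset.Icc (s+1) t, f h := by
    intro f
    rw [← Finset.Ico_add_one_right_eq_Icc, ← Finset.Ico_add_one_right_eq_Icc, ← Finset.Ico_add_one_right_eq_Icc]
    exact (Finset.sum_Ico_consecutive f (by omega) (by omega)).symm
  have w1 := (pooledWeight_pos hn h1 hjs (by omega)).ne'
  have w2 := (pooledWeight_pos hn (j := s+1) (by omega) (by omega) htk).ne'
  have wt := (pooledWeight_pos hn h1 (by omega) htk).ne'
  refine ⟨hsplit n, ?_⟩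
  unfold pooledMean
  rw [mulDiv wt, mulDiv w1, mulDiv w2]
  exact hsplit (fun h => n h * Y h)

lemma firstIdx_spec (ht1 : 1 ≤ t) :
    1 ≤ firstIdx n Y t ∧ firstIdx n Y t ≤ t ∧
      ∀ j', 1 ≤ j' → j' ≤ t →
        pooledMean n Y j' t ≤ pooledMean n Y (firstIdx n Y t) t := by
  have hne : {j | 1 ≤ j ∧ j ≤ t ∧ ∀ j', 1 ≤ j' → j' ≤ t →
      pooledMean n Y j' t ≤ pooledMean n Y j t}.Nonempty := by
    obtain ⟨b, hb, hmax⟩ := Finset.exists_max_image (Finset.Icc 1 t)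
      (fun j => pooledMean n Y j t) ⟨1, by rw [Finset.mem_Icc]; omega⟩
    rw [Finset.mem_Icc] at hb
    exact ⟨b, hb.1, hb.2, fun j' h1 h2 => hmax j' (by rw [Finset.mem_Icc]; omega)⟩
  exact Nat.sInf_mem hne


lemma le_bmax {j s : ℕ} (hj1 : 1 ≤ j) (hjs : j ≤ s) :
    pooledMean n Y j s ≤ bmax n Y s := by
  unfold bmax
  exact Finset.le_sup' (fun j => pooledMean n Y j s)
    (by rw [Finset.mem_Icc]; exact ⟨hj1, le_trans hjs (le_max_right 1 s)⟩)

lemma bmax_le {s : ℕ} (hs1 : 1 ≤ s) {x : ℝ}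
    (h : ∀ j, 1 ≤ j → j ≤ s → pooledMean n Y j s ≤ x) : bmax n Y s ≤ x := by
  unfold bmax
  apply Finset.sup'_le
  intro j hj
  rw [Finset.mem_Icc, max_eq_right hs1] at hj
  exact h j hj.1 hj.2

lemma minimax_le {i s t : ℕ} (his : i ≤ s) (hst : s ≤ t) :
    minimax n Y i t ≤ bmax n Y s := by
  unfold minimax
  exact Finset.inf'_le (fun s => bmax n Y s)
    (by rw [Finset.mem_Icc]; exact ⟨his, le_trans hst (le_max_right i t)⟩)

lemma le_minimax {i t : ℕ} (hit : i ≤ t) {x : ℝ}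
    (h : ∀ s, i ≤ s → s ≤ t → x ≤ bmax n Y s) : x ≤ minimax n Y i t := by
  unfold minimax
  apply Finset.le_inf'
  intro s hs
  rw [Finset.mem_Icc, max_eq_right hit] at hs
  exact h s hs.1 hs.2

section ff
variable (hn : ∀ h, 1 ≤ h → h ≤ k → 0 < n h) {t : ℕ} (ht1 : 1 ≤ t) (htk : t ≤ k)
include hn ht1 htk

/-- L1 : the top-block mean only grows when truncated on the right, within `[f, t]`. -/
lemma mean_f_mono {s : ℕ} (hfs : firstIdx n Y t ≤ s) (hst : s ≤ t) :
    pooledMean n Y (firstIdx n Y t) t ≤ pooledMean n Y (firstIdx n Y t) s := by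
  obtain ⟨hf1, hft, hmax⟩ := firstIdx_spec (n := n) (Y := Y) ht1
  rcases eq_or_lt_of_le hst with rfl | hst'
  · exact le_refl _
  · obtain ⟨hW, hM⟩ := pooled_split (Y := Y) hn hf1 hfs hst' htk
    have h2 := hmax (s+1) (by omega) (by omega)
    have w1 := pooledWeight_pos hn (j := firstIdx n Y t) hf1 hfs (by omega)
    have w2 := pooledWeight_pos hn (j := s+1) (by omega) (by omega) htk
    have h3 := mul_le_mul_of_nonneg_left h2 w2.le
    refine le_of_mul_le_mul_left ?_ w1
    rw [hW] at hM
    nlinarith [hM, h3]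

/-- L2 : pre-block pooled means up to `f-1` are below the top-block mean. -/
lemma mean_pre_le {j : ℕ} (hj1 : 1 ≤ j) (hjf : j ≤ firstIdx n Y t - 1) :
    pooledMean n Y j (firstIdx n Y t - 1) ≤ pooledMean n Y (firstIdx n Y t) t := by
  obtain ⟨hf1, hft, hmax⟩ := firstIdx_spec (n := n) (Y := Y) ht1
  have hft' : firstIdx n Y t - 1 < t := by omega
  have hsp := pooled_split (Y := Y) hn hj1 hjf hft' htk
  rw [show firstIdx n Y t - 1 + 1 = firstIdx n Y t by omega] at hsp
  obtain ⟨hW, hM⟩ := hsp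
  have h2 := hmax j hj1 (by omega)
  have w1 := pooledWeight_pos hn hj1 hjf (by omega)
  have w2 := pooledWeight_pos hn (j := firstIdx n Y t) hf1 hft htk
  have h3 := mul_le_mul_of_nonneg_left h2 (add_nonneg w1.le w2.le)
  refine le_of_mul_le_mul_left ?_ w1
  rw [hW] at hM
  nlinarith [hM, h3]

lemma bmax_eq : bmax n Y t = pooledMean n Y (firstIdx n Y t) t := by
  obtain ⟨hf1, hft, hmax⟩ := firstIdx_spec (n := n) (Y := Y) ht1
  exact le_antisymm (bmax_le ht1 fun j h1 h2 => hmax j h1 h2) (le_bmax hf1 hft)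

/-- L4 : `bmax t ≤ bmax s` for `f ≤ s ≤ t`. -/
lemma bmax_le_bmax {s : ℕ} (hfs : firstIdx n Y t ≤ s) (hst : s ≤ t) :
    bmax n Y t ≤ bmax n Y s := by
  obtain ⟨hf1, hft, hmax⟩ := firstIdx_spec (n := n) (Y := Y) ht1
  rw [bmax_eq hn ht1 htk]
  calc pooledMean n Y (firstIdx n Y t) t ≤ pooledMean n Y (firstIdx n Y t) s :=
        mean_f_mono hn ht1 htk hfs hst
    _ ≤ bmax n Y s := le_bmax (by omega) hfs

/-- L5 : `bmax (f-1) ≤ bmax t` when `2 ≤ f`. -/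
lemma bmax_pred_le (hf2 : 2 ≤ firstIdx n Y t) :
    bmax n Y (firstIdx n Y t - 1) ≤ bmax n Y t := by
  rw [bmax_eq hn ht1 htk]
  exact bmax_le (by omega) fun j h1 h2 => mean_pre_le hn ht1 htk h1 h2

end ff

theorem sdmmsaAux_eq_minimax (hn : ∀ h, 1 ≤ h → h ≤ k → 0 < n h) :
    ∀ fuel t i, 1 ≤ i → i ≤ t → t ≤ k → t ≤ fuel →
      sdmmsaAux n Y fuel t i = minimax n Y i t := by
  intro fuel
  induction fuel with
  | zero => intro t i h1 h2 h3 h4; omega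
  | succ fuel ih =>
    intro t i hi1 hit htk htf
    have ht1 : 1 ≤ t := le_trans hi1 hit
    obtain ⟨hf1, hft, hmax⟩ := firstIdx_spec (n := n) (Y := Y) (t := t) ht1
    rw [sdmmsaAux]
    by_cases hfi : firstIdx n Y t ≤ i
    · rw [if_pos hfi]
      refine le_antisymm (le_minimax hit fun s his hst => ?_) ?_
      · exact (mean_f_mono hn ht1 htk (le_trans hfi his) hst).trans
          (le_bmax hf1 (le_trans hfi his))
      · rw [← bmax_eq hn ht1 htk]
        exact minimax_le hit le_rfl
    · rw [if_neg hfi]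
      have hif : i ≤ firstIdx n Y t - 1 := by omega
      have hf2 : 2 ≤ firstIdx n Y t := by omega
      rw [ih (firstIdx n Y t - 1) i hi1 hif (by omega) (by omega)]
      refine le_antisymm (le_minimax hit fun s his hst => ?_)
        (le_minimax hif fun s his hsf => minimax_le his (by omega))
      by_cases hsf : s ≤ firstIdx n Y t - 1
      · exact minimax_le his hsf
      · calc minimax n Y i (firstIdx n Y t - 1) ≤ bmax n Y (firstIdx n Y t - 1) :=
              minimax_le hif le_rfl
          _ ≤ bmax n Y t := bmax_pred_le hn ht1 htk hf2
          _ ≤ bmax n Y s := bmax_le_bmax hn ht1 htk (by omega) hst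

theorem muhat_mono (hn : ∀ h, 1 ≤ h → h ≤ k → 0 < n h) (hk : 1 ≤ k)
    (hYY' : ∀ h, Y h ≤ Y' h) {i : ℕ} (hi1 : 1 ≤ i) (hik : i ≤ k) :
    muhat n Y k i ≤ muhat n Y' k i := by
  rw [muhat, muhat, sdmmsaAux_eq_minimax hn k k i hi1 hik le_rfl le_rfl,
    sdmmsaAux_eq_minimax hn k k i hi1 hik le_rfl le_rfl]
  apply le_minimax hik
  intro s his hsk
  refine (minimax_le his hsk).trans ?_
  apply bmax_le (by omega)
  intro j hj1 hjs
  calc pooledMean n Y j s ≤ pooledMean n Y' j s := by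
        unfold pooledMean
        have hW := pooledWeight_pos hn hj1 (by omega : j ≤ s) (by omega)
        gcongr with h hh
        · rw [Finset.mem_Icc] at hh
          exact (hn h (by omega) (by omega)).le
        · exact hYY' h
    _ ≤ bmax n Y' s := le_bmax hj1 hjs

end SDMMSAProof
end SDMMSAProof


open MeasureTheory ProbabilityTheory

noncomputable section

/-- The joint law of `(Ȳ_0, (Ȳ_1,…,Ȳ_k), V)`: independent coordinates with
`Ȳ_0 ~ N(μ_0, σ²/n_0)`, `Ȳ_j ~ N(μ_j, σ²/n_j)` (coordinate `v : Fin k` carrying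
`Ȳ_{v+1}`) and `V ~ χ²_ν`. -/
def jointLaw (k ν : ℕ) (n0 : ℝ) (n : ℕ → ℝ) (σ μ0 : ℝ) (μ : ℕ → ℝ) :
    Measure (ℝ × (Fin k → ℝ) × ℝ) :=
  (gaussianReal μ0 ((σ ^ 2 / n0).toNNReal)).prod
    ((Measure.pi fun v : Fin k =>
        gaussianReal (μ ((v : ℕ) + 1)) ((σ ^ 2 / n ((v : ℕ) + 1)).toNNReal)).prod
      (chiSquared ν))

/-- The rejection region `R^I_{i,c} = {(μ̂_i - Ȳ_0 - δ)/S > c}`, where `μ̂_i` is the SDMMSA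
estimate computed from `(Ȳ_1,…,Ȳ_k)` and `S = σ√(V/ν)`. -/
def rejRegion (k ν : ℕ) (n : ℕ → ℝ) (σ δ : ℝ) (i : ℕ) (c : ℝ) :
    Set (ℝ × (Fin k → ℝ) × ℝ) :=
  {p | c < (muhat n (fun t => if h : t - 1 < k then p.2.1 ⟨t - 1, h⟩ else 0) k i
            - p.1 - δ) / (σ * Real.sqrt (p.2.2 / ν))}

namespace SDMMSAProof

/-- The translation measurable equivalence on the product space. -/
def shiftEquiv (k : ℕ) (δv : Fin k → ℝ) : (ℝ × (Fin k → ℝ) × ℝ) ≃ᵐ (ℝ × (Fin k → ℝ) × ℝ) :=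
  (MeasurableEquiv.refl ℝ).prodCongr
    ((MeasurableEquiv.piCongrRight fun v => MeasurableEquiv.addRight (δv v)).prodCongr
      (MeasurableEquiv.refl ℝ))

lemma shiftEquiv_apply (k : ℕ) (δv : Fin k → ℝ) (p : ℝ × (Fin k → ℝ) × ℝ) :
    shiftEquiv k δv p = (p.1, fun v => p.2.1 v + δv v, p.2.2) := rfl

lemma pi_gauss_map (k : ℕ) (m δv : Fin k → ℝ) (V : Fin k → NNReal) :
    Measure.pi (fun v => gaussianReal (m v + δv v) (V v)) =
      (Measure.pi fun v => gaussianReal (m v) (V v)).map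
        (MeasurableEquiv.piCongrRight fun v => MeasurableEquiv.addRight (δv v)) := by
  refine Measure.pi_eq fun s hs => ?_
  rw [MeasurableEquiv.map_apply]
  have hpre : (MeasurableEquiv.piCongrRight fun v => MeasurableEquiv.addRight (δv v)) ⁻¹'
      (Set.pi Set.univ s) = Set.pi Set.univ (fun v => (· + δv v) ⁻¹' s v) := by
    ext g
    simp only [Set.mem_preimage, Set.mem_pi, Set.mem_univ, forall_true_left]
    rfl
  rw [hpre, Measure.pi_pi]
  congr 1
  ext v
  rw [← gaussianReal_map_add_const (δv v), Measure.map_apply (measurable_add_const _) (hs v)]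

lemma jointLaw_shift (k ν : ℕ) (hν : 1 ≤ ν) (n0 : ℝ) (n : ℕ → ℝ) (σ μ0 : ℝ)
    (μ μ' : ℕ → ℝ) (δv : Fin k → ℝ)
    (hμ : ∀ v : Fin k, μ' ((v : ℕ) + 1) = μ ((v : ℕ) + 1) + δv v) :
    jointLaw k ν n0 n σ μ0 μ' = (jointLaw k ν n0 n σ μ0 μ).map (shiftEquiv k δv) := by
  have hχ : IsProbabilityMeasure (chiSquared ν) := by
    refine isProbabilityMeasure_gammaMeasure ?_ (by norm_num)
    have : (0 : ℝ) < ν := by exact_mod_cast hν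
    linarith
  set Φ := MeasurableEquiv.piCongrRight fun v => MeasurableEquiv.addRight (δv v) with hΦ
  have hpi : (Measure.pi fun v : Fin k =>
        gaussianReal (μ' ((v : ℕ) + 1)) ((σ ^ 2 / n ((v : ℕ) + 1)).toNNReal))
      = (Measure.pi fun v : Fin k =>
          gaussianReal (μ ((v : ℕ) + 1)) ((σ ^ 2 / n ((v : ℕ) + 1)).toNNReal)).map Φ := by
    rw [← pi_gauss_map k _ δv _]
    congr 1
    ext v : 1
    rw [hμ v]
  rw [jointLaw, jointLaw, hpi]
  have h2 : ((Measure.pi fun v : Fin k =>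
        gaussianReal (μ ((v : ℕ) + 1)) ((σ ^ 2 / n ((v : ℕ) + 1)).toNNReal)).map Φ).prod
        (chiSquared ν)
      = (((Measure.pi fun v : Fin k =>
          gaussianReal (μ ((v : ℕ) + 1)) ((σ ^ 2 / n ((v : ℕ) + 1)).toNNReal)).prod
          (chiSquared ν)).map (Prod.map Φ id)) := by
    rw [← Measure.map_prod_map _ _ Φ.measurable measurable_id, Measure.map_id]
  rw [h2]
  have h3 : (gaussianReal μ0 ((σ ^ 2 / n0).toNNReal)).prod
      ((((Measure.pi fun v : Fin k =>
          gaussianReal (μ ((v : ℕ) + 1)) ((σ ^ 2 / n ((v : ℕ) + 1)).toNNReal)).prod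
          (chiSquared ν)).map (Prod.map Φ id)))
      = ((gaussianReal μ0 ((σ ^ 2 / n0).toNNReal)).prod
          (((Measure.pi fun v : Fin k =>
          gaussianReal (μ ((v : ℕ) + 1)) ((σ ^ 2 / n ((v : ℕ) + 1)).toNNReal)).prod
          (chiSquared ν)))).map (Prod.map id (Prod.map Φ id)) := by
    rw [← Measure.map_prod_map _ _ measurable_id ((Φ.measurable.prodMap measurable_id)),
      Measure.map_id]
  rw [h3]
  congr 1

end SDMMSAProof

/-- Lemma 4, monotone comparison form: the probability of the rejection
region `R^I_{i,c}` is nondecreasing in each `μ_j`, `j ∈ [1,k]` (with `μ_0`, the other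
means and `σ` fixed); consequently, for any monotone configuration `μ_1 ≤ … ≤ μ_k` with
`μ_i ≤ μ_0 + δ`, the probability is at most the one obtained at the configuration
`μ'_j = μ_0 + δ` for `j ≤ i` and `μ'_j = max(μ_j, μ_0 + δ)` for `j > i`. -/
theorem rejRegion_prob_monotone (k : ℕ) (hk : 1 ≤ k) (ν : ℕ) (hν : 1 ≤ ν)
    (n0 : ℝ) (hn0 : 0 < n0) (n : ℕ → ℝ) (hn : ∀ h, 1 ≤ h → h ≤ k → 0 < n h)
    (σ : ℝ) (hσ : 0 < σ) (δ : ℝ) (hδ : 0 ≤ δ) (c : ℝ) (μ0 : ℝ)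
    (i : ℕ) (hi1 : 1 ≤ i) (hik : i ≤ k) :
    (∀ j, 1 ≤ j → j ≤ k → ∀ μ μ' : ℕ → ℝ,
      μ j ≤ μ' j → (∀ j', j' ≠ j → μ j' = μ' j') →
      jointLaw k ν n0 n σ μ0 μ (rejRegion k ν n σ δ i c) ≤
        jointLaw k ν n0 n σ μ0 μ' (rejRegion k ν n σ δ i c)) ∧
    (∀ μ : ℕ → ℝ, (∀ j j', 1 ≤ j → j ≤ j' → j' ≤ k → μ j ≤ μ j') → μ i ≤ μ0 + δ →
      jointLaw k ν n0 n σ μ0 μ (rejRegion k ν n σ δ i c) ≤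
        jointLaw k ν n0 n σ μ0
          (fun j => if j ≤ i then μ0 + δ else max (μ j) (μ0 + δ))
          (rejRegion k ν n σ δ i c)) := by
  have part1 : ∀ j, 1 ≤ j → j ≤ k → ∀ μ μ' : ℕ → ℝ,
      μ j ≤ μ' j → (∀ j', j' ≠ j → μ j' = μ' j') →
      jointLaw k ν n0 n σ μ0 μ (rejRegion k ν n σ δ i c) ≤
        jointLaw k ν n0 n σ μ0 μ' (rejRegion k ν n σ δ i c) := by
    intro j hj1 hjk μ μ' hle heq
    have hjlt : j - 1 < k := by omega
    set v0 : Fin k := ⟨j - 1, hjlt⟩ with hv0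
    set d : ℝ := μ' j - μ j with hd
    have hd0 : 0 ≤ d := by rw [hd]; linarith
    set δv : Fin k → ℝ := fun v => if v = v0 then d else 0 with hδv
    have hδv0 : ∀ v, 0 ≤ δv v := by
      intro v
      rw [hδv]
      dsimp only
      split <;> [exact hd0; exact le_refl 0]
    have hμ : ∀ v : Fin k, μ' ((v : ℕ) + 1) = μ ((v : ℕ) + 1) + δv v := by
      intro v
      by_cases hv : v = v0
      · have hval : ((v : ℕ)) + 1 = j := by rw [hv, hv0]; show j - 1 + 1 = j; omega
        rw [hval, hδv]
        simp only [if_pos hv]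
        rw [hd]; ring
      · have hne : (v : ℕ) + 1 ≠ j := by
          intro hcontra
          exact hv (Fin.ext (by rw [hv0]; show (v : ℕ) = j - 1; omega))
        rw [← heq _ hne, hδv]
        simp only [if_neg hv, add_zero]
    rw [SDMMSAProof.jointLaw_shift k ν hν n0 n σ μ0 μ μ' δv hμ,
      MeasurableEquiv.map_apply]
    apply measure_mono
    intro p hp
    rw [Set.mem_preimage, SDMMSAProof.shiftEquiv_apply]
    simp only [rejRegion, Set.mem_setOf_eq] at hp ⊢
    have hmu : muhat n (fun t => if h : t - 1 < k then p.2.1 ⟨t - 1, h⟩ else 0) k i ≤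
        muhat n (fun t => if h : t - 1 < k then p.2.1 ⟨t - 1, h⟩ + δv ⟨t - 1, h⟩ else 0) k i := by
      apply SDMMSAProof.muhat_mono hn hk _ hi1 hik
      intro t
      by_cases h : t - 1 < k
      · simp only [dif_pos h]
        have := hδv0 ⟨t - 1, h⟩
        linarith
      · simp only [dif_neg h]
        exact le_refl 0
    rcases (mul_nonneg hσ.le (Real.sqrt_nonneg (p.2.2 / ν))).eq_or_lt with hD | hD
    · rw [← hD, div_zero] at hp ⊢
      exact hp
    · refine lt_of_lt_of_le hp ?_
      gcongr
  refine ⟨part1, ?_⟩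
  intro μ hmono hμi
  set tgt : ℕ → ℝ := fun j => if j ≤ i then μ0 + δ else max (μ j) (μ0 + δ) with htgt
  set μseq : ℕ → ℕ → ℝ := fun m j => if j ≤ m then tgt j else μ j with hμseq
  have hcongr : ∀ μ₁ μ₂ : ℕ → ℝ, (∀ v : Fin k, μ₁ ((v : ℕ) + 1) = μ₂ ((v : ℕ) + 1)) →
      jointLaw k ν n0 n σ μ0 μ₁ = jointLaw k ν n0 n σ μ0 μ₂ := by
    intro μ₁ μ₂ h
    have hfun : (fun v : Fin k =>
        gaussianReal (μ₁ ((v : ℕ) + 1)) ((σ ^ 2 / n ((v : ℕ) + 1)).toNNReal)) =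
        fun v : Fin k =>
          gaussianReal (μ₂ ((v : ℕ) + 1)) ((σ ^ 2 / n ((v : ℕ) + 1)).toNNReal) :=
      funext fun v => by rw [h v]
    rw [jointLaw, jointLaw, hfun]
  have key : ∀ m, m ≤ k → jointLaw k ν n0 n σ μ0 μ (rejRegion k ν n σ δ i c) ≤
      jointLaw k ν n0 n σ μ0 (μseq m) (rejRegion k ν n σ δ i c) := by
    intro m
    induction m with
    | zero =>
      intro _
      have h0 : jointLaw k ν n0 n σ μ0 (μseq 0) = jointLaw k ν n0 n σ μ0 μ := by
        apply hcongr
        intro v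
        rw [hμseq]
        simp only [Nat.add_eq_zero, if_neg (by omega : ¬((v : ℕ) + 1 ≤ 0))]
      rw [h0]
    | succ m ih =>
      intro hm
      refine (ih (by omega)).trans ?_
      apply part1 (m + 1) (by omega) hm (μseq m) (μseq (m + 1))
      · rw [hμseq]
        simp only [if_neg (by omega : ¬(m + 1 ≤ m)), if_pos (le_refl (m + 1))]
        rw [htgt]
        dsimp only
        by_cases hmi : m + 1 ≤ i
        · rw [if_pos hmi]
          exact le_trans (hmono (m + 1) i (by omega) hmi hik) hμi
        · rw [if_neg hmi]
          exact le_max_left _ _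
      · intro j' hj'
        rw [hμseq]
        dsimp only
        by_cases h : j' ≤ m
        · rw [if_pos h, if_pos (by omega : j' ≤ m + 1)]
        · rw [if_neg h, if_neg (by omega : ¬(j' ≤ m + 1))]
  have hfin : jointLaw k ν n0 n σ μ0 (μseq k) = jointLaw k ν n0 n σ μ0 tgt := by
    apply hcongr
    intro v
    rw [hμseq]
    dsimp only
    rw [if_pos (by omega : (v : ℕ) + 1 ≤ k)]
  rw [← hfin]
  exact key k le_rfl
end
end

section
/- (Theorem 6: strong control of the experimentwise error rate for nested hypotheses with nested rejection regions) Let Θ be a set of parameters, and for each θ ∈ Θ let P_θ be a probability measure on a common measurable space. Let H_1 ⊇ H_2 ⊇ … ⊇ H_k be a decreasing sequence of subsets of Θ (null hypotheses), let R_1 ⊆ R_2 ⊆ … ⊆ R_k be an increasing sequence of measurable events (rejection regions), and let α ∈ (0,1). Suppose each test is of level α: for every i ∈ [1,k] and every θ ∈ H_i, P_θ(R_i) ≤ α. Consider the multiple testing procedure that rejects H_i exactly when R_i occurs. Then for every θ ∈ Θ, the probability of making at least one incorrect assertion is at most α: P_θ( ∪_{i : θ ∈ H_i} R_i ) ≤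 α. -/
open MeasureTheory

/-- Theorem 6: strong control of the experimentwise error rate for a
decreasing sequence of null hypotheses `H_1 ⊇ … ⊇ H_k` tested with an increasing sequence
of level-`α` rejection regions `R_1 ⊆ … ⊆ R_k`: for every parameter `θ`, the probability
of rejecting at least one true hypothesis is at most `α`. -/
theorem strong_control_nested {Ω Θ : Type*} [MeasurableSpace Ω]
    (P : Θ → Measure Ω) (hP : ∀ θ, IsProbabilityMeasure (P θ))
    (k : ℕ) (H : ℕ → Set Θ) (R : ℕ → Set Ω)
    (hH : ∀ i i', 1 ≤ i → i ≤ i' → i' ≤ k → H i' ⊆ H i)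
    (hR : ∀ i i', 1 ≤ i → i ≤ i' → i' ≤ k → R i ⊆ R i')
    (hRmeas : ∀ i, 1 ≤ i → i ≤ k → MeasurableSet (R i))
    (α : ENNReal) (hα0 : 0 < α) (hα1 : α < 1)
    (hlevel : ∀ i, 1 ≤ i → i ≤ k → ∀ θ ∈ H i, P θ (R i) ≤ α) :
    ∀ θ, P θ (⋃ i ∈ {i : ℕ | 1 ≤ i ∧ i ≤ k ∧ θ ∈ H i}, R i) ≤ α := by
  intro θ
  set S : Set ℕ := {i : ℕ | 1 ≤ i ∧ i ≤ k ∧ θ ∈ H i} with hS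
  by_cases hne : S.Nonempty
  · have hbdd : BddAbove S := ⟨k, fun i hi => hi.2.1⟩
    have hmem : sSup S ∈ S := Nat.sSup_mem hne hbdd
    obtain ⟨h1, h2, h3⟩ := hmem
    have hsub : (⋃ i ∈ S, R i) ⊆ R (sSup S) := by
      refine Set.iUnion₂_subset fun i hi => ?_
      exact hR i (sSup S) hi.1 (le_csSup hbdd hi) h2
    calc P θ (⋃ i ∈ S, R i) ≤ P θ (R (sSup S)) := measure_mono hsub
      _ ≤ α := hlevel _ h1 h2 θ h3
  · rw [Set.not_nonempty_iff_eq_empty] at hne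
    simp [hne]
end
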